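/- With K(x,t) = Σ_{k=1}^∞ (2((-1)^k-1)/(Π₁kπ)) e^{-ν(πk/h)²t} sin(πkx/h) and P₁ : [0,∞) → ℝ measurable with |P₁(ξ)| ≤ p̄, the function U₁(x₃) = ∫₀^∞ K(x₃,ξ)P₁(ξ)dξ satisfies h^{1/2}‖U₁‖_{L²([0,h])}/ν ≤ p̄h³/(Π₁ν²π²). -/

import Mathlib

open MeasureTheory Real Set Filter

private lemma tele_hasSum : HasSum (fun n : ℕ => (1:ℝ)/((n+1)*(n+2)*(n+3))) (1/4) := by
  have hnn : ∀ n : ℕ, 0 ≤ (1:ℝ)/((n+1)*(n+2)*(n+3)) := by intro n; positivity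
  have hpart : ∀ N : ℕ, ∑ i ∈ Finset.range N, (1:ℝ)/((i+1)*(i+2)*(i+3))
      = 1/4 - 1/(2*(N+1)*(N+2)) := by
    intro N
    induction N with
    | zero => norm_num
    | succ n ih =>
      rw [Finset.sum_range_succ, ih]
      have h1 : ((n:ℝ)+1) > 0 := by positivity
      have h2 : ((n:ℝ)+2) > 0 := by positivity
      have h3 : ((n:ℝ)+3) > 0 := by positivity
      push_cast
      field_simp
      ring
  have hsumm : Summable (fun n : ℕ => (1:ℝ)/((n+1)*(n+2)*(n+3))) := by
    refine summable_of_sum_range_le (c := 1/4) hnn fun n => ?_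
    rw [hpart n]
    have : (0:ℝ) ≤ 1/(2*(n+1)*(n+2)) := by positivity
    linarith
  rw [hasSum_iff_tendsto_nat_of_nonneg hnn]
  have htend : Tendsto (fun N : ℕ => (1:ℝ)/4 - 1/(2*(N+1)*(N+2))) atTop (nhds (1/4 - 0)) := by
    refine Tendsto.sub tendsto_const_nhds ?_
    have hb : Tendsto (fun N : ℕ => (1:ℝ)/(N+1)) atTop (nhds 0) :=
      tendsto_one_div_add_atTop_nhds_zero_nat
    refine squeeze_zero (fun n => by positivity) (fun n => ?_) hb
    rw [div_le_div_iff₀ (by positivity) (by positivity)]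
    nlinarith [Nat.cast_nonneg (α := ℝ) n]
  rw [sub_zero] at htend
  exact Tendsto.congr (fun N => (hpart N).symm) htend

private lemma odd_cube_summable : Summable (fun m : ℕ => (1:ℝ)/(2*m+1)^3) := by
  have hp : Summable (fun n : ℕ => (1:ℝ)/(n+1)^2) := by
    have := (Real.summable_one_div_nat_pow (p := 2)).mpr (by norm_num)
    exact_mod_cast (summable_nat_add_iff 1).mpr this
  refine Summable.of_nonneg_of_le (fun m => by positivity) (fun m => ?_) hp
  rw [div_le_div_iff₀ (by positivity) (by positivity)]
  nlinarith [Nat.cast_nonneg (α := ℝ) m, sq_nonneg ((m:ℝ))]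

private lemma odd_cube_sum_le : ∑' m : ℕ, (1:ℝ)/(2*m+1)^3 ≤ 923/864 := by
  have hs := odd_cube_summable
  rw [Summable.tsum_eq_zero_add hs]
  rw [Summable.tsum_eq_zero_add (by exact_mod_cast (summable_nat_add_iff 1).mpr hs)]
  have htail : ∑' n : ℕ, (1:ℝ)/(2*(n+1+1)+1)^3 ≤ 1/32 := by
    have hle : ∀ n : ℕ, (1:ℝ)/(2*(n+1+1)+1)^3 ≤ (1/8) * (1/((n+1)*(n+2)*(n+3))) := by
      intro n
      have h1 : ((n:ℝ)+1) > 0 := by positivity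
      rw [one_div_mul_one_div_rev]
      rw [div_le_div_iff₀ (by positivity) (by positivity)]
      nlinarith [Nat.cast_nonneg (α := ℝ) n, sq_nonneg ((n:ℝ)),
        pow_pos (by positivity : (0:ℝ) < (n:ℝ)+1) 3]
    calc ∑' n : ℕ, (1:ℝ)/(2*(n+1+1)+1)^3
        ≤ ∑' n : ℕ, (1/8) * ((1:ℝ)/((n+1)*(n+2)*(n+3))) := by
          refine Summable.tsum_le_tsum hle ?_ (tele_hasSum.summable.mul_left _)
          exact_mod_cast (summable_nat_add_iff 2).mpr hs
      _ = (1/8) * (1/4) := by rw [tsum_mul_left, tele_hasSum.tsum_eq]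
      _ = 1/32 := by norm_num
  push_cast at htail ⊢
  norm_num at htail ⊢
  linarith

private lemma sin_sq_integral (h : ℝ) (hh : 0 < h) (k : ℕ+) :
    ∫ x in (0:ℝ)..h, Real.sin (Real.pi * k * x / h) ^ 2 = h / 2 := by
  have hc : (2 * Real.pi * k / h) ≠ 0 := by
    have := Real.pi_pos
    positivity
  have hcos : ∫ x in (0:ℝ)..h, Real.cos (2 * Real.pi * k / h * x) = 0 := by
    rw [intervalIntegral.integral_comp_mul_left (fun y => Real.cos y) hc]
    rw [mul_zero, integral_cos, Real.sin_zero]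
    have : 2 * Real.pi * k / h * h = 2 * k * Real.pi := by field_simp
    rw [this]
    have : ((2 * (k:ℕ) : ℕ) : ℝ) * Real.pi = 2 * (k:ℝ) * Real.pi := by push_cast; ring
    rw [← this, Real.sin_nat_mul_pi]
    simp
  have heq : ∀ x : ℝ, Real.sin (Real.pi * k * x / h) ^ 2
      = 1/2 - Real.cos (2 * Real.pi * k / h * x) / 2 := by
    intro x
    rw [Real.sin_sq_eq_half_sub]
    congr 2
    field_simp
  rw [intervalIntegral.integral_congr (g := fun x => 1/2 - Real.cos (2 * Real.pi * k / h * x) / 2)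
    (fun x _ => heq x)]
  rw [intervalIntegral.integral_sub intervalIntegrable_const
    ((Continuous.intervalIntegrable (by continuity) _ _))]
  have h2 : ∫ x in (0:ℝ)..h, Real.cos (2 * Real.pi * k / h * x) / 2
      = (∫ x in (0:ℝ)..h, Real.cos (2 * Real.pi * k / h * x)) / 2 :=
    intervalIntegral.integral_div _ _
  rw [h2, hcos]
  norm_num

private lemma tsum_amgm {c s : ℕ+ → ℝ} (hc : ∀ k, 0 ≤ c k) (hs : ∀ k, |s k| ≤ 1)
    (hsum : Summable c) :
    (∑' k, c k * |s k|) ^ 2 ≤ (∑' k, c k) * ∑' k, c k * (s k) ^ 2 := by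
  set a : ℕ+ → ℝ := fun k => c k * |s k| with ha
  set b : ℕ+ → ℝ := fun k => c k * (s k) ^ 2 with hb
  have hann : ∀ k, 0 ≤ a k := fun k => mul_nonneg (hc k) (abs_nonneg _)
  have hbnn : ∀ k, 0 ≤ b k := fun k => mul_nonneg (hc k) (sq_nonneg _)
  have hale : ∀ k, a k ≤ c k := fun k =>
    mul_le_of_le_one_right (hc k) (hs k)
  have hble : ∀ k, b k ≤ c k := fun k => by
    have : (s k) ^ 2 ≤ 1 := by
      rw [← one_pow 2]; exact sq_le_sq' (by linarith [(abs_le.mp (hs k)).1]) (abs_le.mp (hs k)).2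
    exact mul_le_of_le_one_right (hc k) this
  have hsa : Summable a := Summable.of_nonneg_of_le hann hale hsum
  have hsb : Summable b := Summable.of_nonneg_of_le hbnn hble hsum
  have key : ∀ k j, a k * a j ≤ c k * c j * ((s k)^2 + (s j)^2) / 2 := by
    intro k j
    have h1 : |s k| * |s j| ≤ ((s k)^2 + (s j)^2) / 2 := by
      nlinarith [sq_nonneg (|s k| - |s j|), sq_abs (s k), sq_abs (s j)]
    have h2 : 0 ≤ c k * c j := mul_nonneg (hc k) (hc j)
    calc a k * a j = (c k * c j) * (|s k| * |s j|) := by ring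
      _ ≤ (c k * c j) * (((s k)^2 + (s j)^2) / 2) := by
          exact mul_le_mul_of_nonneg_left h1 h2
      _ = c k * c j * ((s k)^2 + (s j)^2) / 2 := by ring
  have step : ∀ k, a k * (∑' j, a j) ≤ (c k * (s k)^2 / 2) * (∑' j, c j)
      + (c k / 2) * (∑' j, b j) := by
    intro k
    have hs1 : Summable (fun j => a k * a j) := hsa.mul_left _
    have hs2 : Summable (fun j => (c k * (s k)^2 / 2) * c j + (c k / 2) * b j) :=
      (hsum.mul_left _).add (hsb.mul_left _)
    have hle : ∀ j, a k * a j ≤ (c k * (s k)^2 / 2) * c j + (c k / 2) * b j := by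
      intro j
      calc a k * a j ≤ c k * c j * ((s k)^2 + (s j)^2) / 2 := key k j
        _ = (c k * (s k)^2 / 2) * c j + (c k / 2) * (c j * (s j)^2) := by ring
    calc a k * (∑' j, a j) = ∑' j, a k * a j := (tsum_mul_left).symm
      _ ≤ ∑' j, ((c k * (s k)^2 / 2) * c j + (c k / 2) * b j) := Summable.tsum_le_tsum hle hs1 hs2
      _ = (c k * (s k)^2 / 2) * (∑' j, c j) + (c k / 2) * (∑' j, b j) := by
          rw [Summable.tsum_add (hsum.mul_left _) (hsb.mul_left _), tsum_mul_left, tsum_mul_left]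
  have houter : (∑' k, a k) * (∑' k, a k) ≤ (∑' k, c k) * (∑' k, b k) := by
    have hA : (∑' k, a k) * (∑' k, a k) = ∑' k, a k * (∑' j, a j) := by
      rw [tsum_mul_right]
    rw [hA]
    have hs1 : Summable (fun k => a k * (∑' j, a j)) := hsa.mul_right _
    have hs2 : Summable (fun k => (c k * (s k)^2 / 2) * (∑' j, c j)
        + (c k / 2) * (∑' j, b j)) := by
      refine Summable.add ?_ ?_
      · exact (hsb.div_const 2).mul_right _
      · exact (hsum.div_const 2).mul_right _
    calc ∑' k, a k * (∑' j, a j)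
        ≤ ∑' k, ((c k * (s k)^2 / 2) * (∑' j, c j) + (c k / 2) * (∑' j, b j)) :=
          Summable.tsum_le_tsum step hs1 hs2
      _ = (∑' k, c k * (s k)^2 / 2) * (∑' j, c j) + (∑' k, c k / 2) * (∑' j, b j) := by
          rw [Summable.tsum_add ((hsb.div_const 2).mul_right _) ((hsum.div_const 2).mul_right _),
            tsum_mul_right, tsum_mul_right]
      _ = (∑' k, c k) * (∑' k, b k) := by
          rw [tsum_div_const, tsum_div_const]
          ring
  calc (∑' k, a k) ^ 2 = (∑' k, a k) * (∑' k, a k) := sq _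
    _ ≤ (∑' k, c k) * (∑' k, b k) := houter

private lemma exp_integral_Ioi (b : ℝ) (hb : 0 < b) :
    ∫ ξ in Set.Ioi (0:ℝ), Real.exp (-(b*ξ)) = 1/b := by
  have := MeasureTheory.integral_comp_mul_left_Ioi (fun u => Real.exp (-u)) 0 hb
  simp only [mul_zero, smul_eq_mul, integral_exp_neg_Ioi_zero] at this
  rw [this, mul_one, one_div]

/-- Bound on the Reynolds number by the pressure drop: with
`K(x,t) = Σ_{k≥1} (2((-1)^k-1)/(Π₁kπ)) e^{-ν(πk/h)²t} sin(πkx/h)` and `|P₁| ≤ p̄`,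
the function `U₁(x₃) = ∫₀^∞ K(x₃,ξ)P₁(ξ)dξ` satisfies
`h^{1/2}‖U₁‖_{L²([0,h])}/ν ≤ p̄h³/(Π₁ν²π²)`. -/
theorem reynolds_number_bound
    (h ν Pi₁ pbar : ℝ) (hh : 0 < h) (hν : 0 < ν) (hPi₁ : 0 < Pi₁) (hpbar : 0 < pbar)
    (P₁ : ℝ → ℝ) (hP₁meas : Measurable P₁) (hP₁bdd : ∀ ξ : ℝ, |P₁ ξ| ≤ pbar)
    (K : ℝ → ℝ → ℝ)
    (hK : ∀ x t : ℝ, K x t =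
      ∑' k : ℕ+, 2 * ((-1 : ℝ) ^ (k : ℕ) - 1) / (Pi₁ * (k : ℝ) * Real.pi) *
        Real.exp (-ν * (Real.pi * (k : ℝ) / h) ^ 2 * t) *
        Real.sin (Real.pi * (k : ℝ) * x / h))
    (U₁ : ℝ → ℝ)
    (hU₁ : ∀ x : ℝ, U₁ x = ∫ ξ in Set.Ioi (0:ℝ), K x ξ * P₁ ξ) :
    Real.sqrt h * Real.sqrt (∫ x in (0:ℝ)..h, (U₁ x) ^ 2) / ν ≤
      pbar * h ^ 3 / (Pi₁ * ν ^ 2 * Real.pi ^ 2) := by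
  have hπ : 0 < Real.pi := Real.pi_pos
  have hkpos : ∀ k : ℕ+, (0:ℝ) < (k:ℝ) := fun k => by exact_mod_cast k.pos
  set lam : ℕ+ → ℝ := fun k => ν * (Real.pi * (k:ℝ) / h) ^ 2 with hlamdef
  have hlam : ∀ k, 0 < lam k := by
    intro k
    have := hkpos k
    positivity
  set A : ℕ+ → ℝ := fun k => 2 * ((-1 : ℝ) ^ (k : ℕ) - 1) / (Pi₁ * (k : ℝ) * Real.pi) with hAdef
  set s : ℕ+ → ℝ → ℝ := fun k x => Real.sin (Real.pi * (k:ℝ) * x / h) with hsdef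
  set c : ℕ+ → ℝ := fun k =>
    A k * ∫ ξ in Set.Ioi (0:ℝ), Real.exp (-(lam k * ξ)) * P₁ ξ with hcdef
  set B : ℝ := 4 * pbar * h^2 / (Pi₁ * ν * Real.pi^3) with hBdef
  have hB : 0 < B := by positivity
  set w : ℕ+ → ℝ := fun k => if Even (k:ℕ) then 0 else 1/(k:ℝ)^3 with hwdef
  -- integrability of the exponential-pressure product
  have hintEP : ∀ k : ℕ+, IntegrableOn (fun ξ => Real.exp (-(lam k * ξ)) * P₁ ξ)
      (Set.Ioi (0:ℝ)) := by
    intro k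
    have hg : IntegrableOn (fun ξ => pbar * Real.exp (-(lam k) * ξ)) (Set.Ioi (0:ℝ)) :=
      (exp_neg_integrableOn_Ioi 0 (hlam k)).const_mul pbar
    refine Integrable.mono' hg ?_ ?_
    · exact ((Real.continuous_exp.comp
        (continuous_const.mul continuous_id).neg).measurable.mul
        hP₁meas).aestronglyMeasurable
    · filter_upwards with ξ
      rw [norm_mul, Real.norm_eq_abs, Real.norm_eq_abs, Real.abs_exp]
      calc Real.exp (-(lam k * ξ)) * |P₁ ξ| ≤ Real.exp (-(lam k * ξ)) * pbar :=
          mul_le_mul_of_nonneg_left (hP₁bdd ξ) (Real.exp_pos _).le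
        _ = pbar * Real.exp (-(lam k) * ξ) := by rw [neg_mul]; ring
  -- bound on the absolute integral
  have hIabs : ∀ k : ℕ+, ∫ ξ in Set.Ioi (0:ℝ), Real.exp (-(lam k * ξ)) * |P₁ ξ|
      ≤ pbar / lam k := by
    intro k
    have hg : IntegrableOn (fun ξ => pbar * Real.exp (-(lam k) * ξ)) (Set.Ioi (0:ℝ)) :=
      (exp_neg_integrableOn_Ioi 0 (hlam k)).const_mul pbar
    have hint' : IntegrableOn (fun ξ => Real.exp (-(lam k * ξ)) * |P₁ ξ|) (Set.Ioi (0:ℝ)) := by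
      have := (hintEP k).abs
      simpa [abs_mul, Real.abs_exp, IntegrableOn] using this
    have hmono : ∫ ξ in Set.Ioi (0:ℝ), Real.exp (-(lam k * ξ)) * |P₁ ξ|
        ≤ ∫ ξ in Set.Ioi (0:ℝ), pbar * Real.exp (-(lam k) * ξ) := by
      refine integral_mono hint' hg ?_
      intro ξ
      dsimp only
      calc Real.exp (-(lam k * ξ)) * |P₁ ξ| ≤ Real.exp (-(lam k * ξ)) * pbar :=
          mul_le_mul_of_nonneg_left (hP₁bdd ξ) (Real.exp_pos _).le
        _ = pbar * Real.exp (-(lam k) * ξ) := by rw [neg_mul]; ring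
    refine hmono.trans_eq ?_
    rw [integral_const_mul]
    have hv : ∫ ξ in Set.Ioi (0:ℝ), Real.exp (-(lam k) * ξ) = 1/(lam k) := by
      rw [← exp_integral_Ioi (lam k) (hlam k)]
      congr 1
      ext ξ
      rw [neg_mul]
    rw [hv, mul_one_div]
  have hI : ∀ k : ℕ+, |∫ ξ in Set.Ioi (0:ℝ), Real.exp (-(lam k * ξ)) * P₁ ξ| ≤ pbar / lam k := by
    intro k
    have habs : |∫ ξ in Set.Ioi (0:ℝ), Real.exp (-(lam k * ξ)) * P₁ ξ|
        ≤ ∫ ξ in Set.Ioi (0:ℝ), Real.exp (-(lam k * ξ)) * |P₁ ξ| := by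
      simpa [Real.norm_eq_abs, abs_mul, Real.abs_exp] using
        norm_integral_le_integral_norm (μ := volume.restrict (Set.Ioi (0:ℝ)))
          (f := fun ξ => Real.exp (-(lam k * ξ)) * P₁ ξ)
    exact habs.trans (hIabs k)
  -- coefficient bounds
  have hAabs : ∀ k : ℕ+, |A k| ≤ 4 / (Pi₁ * (k:ℝ) * Real.pi) := by
    intro k
    have hk := hkpos k
    have hd : (0:ℝ) < Pi₁ * (k:ℝ) * Real.pi := by positivity
    rw [hAdef]
    dsimp only
    rw [abs_div, abs_of_pos hd]
    have hnum : |2 * ((-1 : ℝ) ^ (k : ℕ) - 1)| ≤ 4 := by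
      rcases Nat.even_or_odd (k:ℕ) with hE | hO
      · rw [hE.neg_one_pow]; norm_num
      · rw [hO.neg_one_pow]; norm_num
    gcongr
  have hAzero : ∀ k : ℕ+, Even (k:ℕ) → A k = 0 := by
    intro k he
    rw [hAdef]
    dsimp only
    rw [he.neg_one_pow]
    norm_num
  have hlamval : ∀ k : ℕ+, pbar / lam k = pbar * h^2 / (ν * Real.pi^2 * (k:ℝ)^2) := by
    intro k
    have hk := hkpos k
    rw [hlamdef]
    dsimp only
    rw [div_pow]
    field_simp
  have hcb' : ∀ k : ℕ+, |c k| ≤ B * (1/(k:ℝ)^3) := by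
    intro k
    have hk := hkpos k
    rw [hcdef]
    dsimp only
    rw [abs_mul]
    calc |A k| * |∫ ξ in Set.Ioi (0:ℝ), Real.exp (-(lam k * ξ)) * P₁ ξ|
        ≤ (4 / (Pi₁ * (k:ℝ) * Real.pi)) * (pbar / lam k) := by
          exact mul_le_mul (hAabs k) (hI k) (abs_nonneg _) (by positivity)
      _ = B * (1/(k:ℝ)^3) := by
          rw [hlamval k, hBdef]
          field_simp
  have hcb : ∀ k : ℕ+, |c k| ≤ B * w k := by
    intro k
    rcases Nat.even_or_odd (k:ℕ) with hE | hO
    · have : c k = 0 := by rw [hcdef]; dsimp only; rw [hAzero k hE, zero_mul]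
      rw [this, abs_zero, hwdef]
      dsimp only
      rw [if_pos hE, mul_zero]
    · have : w k = 1/(k:ℝ)^3 := by
        rw [hwdef]; dsimp only; rw [if_neg (Nat.not_even_iff_odd.mpr hO)]
      rw [this]
      exact hcb' k
  -- summability of w and its sum bound
  have hwfacts : Summable w ∧ ∑' k, w k ≤ 923/864 := by
    set e : ℕ → ℕ+ := fun m => ⟨2*m+1, by omega⟩ with he
    have hinj : Function.Injective e := by
      intro a b hab
      have : (2*a+1 : ℕ) = 2*b+1 := congrArg (fun k : ℕ+ => (k:ℕ)) hab
      omega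
    have hzero : ∀ k ∉ Set.range e, w k = 0 := by
      intro k hk
      rw [hwdef]
      dsimp only
      rw [if_pos]
      rcases Nat.even_or_odd (k:ℕ) with hE | hO
      · exact hE
      · exfalso
        apply hk
        obtain ⟨m, hm⟩ := hO
        refine ⟨m, ?_⟩
        apply PNat.coe_injective
        simp [he, hm]
    have hcomp : (w ∘ e) = fun m : ℕ => (1:ℝ)/(2*m+1)^3 := by
      funext m
      simp only [Function.comp, hwdef, he]
      rw [if_neg (by simp [Nat.even_add_one, parity_simps])]
      norm_num
    have hsum : Summable w :=
      (hinj.summable_iff hzero).mp (by rw [hcomp]; exact odd_cube_summable)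
    refine ⟨hsum, ?_⟩
    have hHS : HasSum w (∑' m : ℕ, (1:ℝ)/(2*m+1)^3) := by
      rw [← Function.Injective.hasSum_iff hinj hzero]
      rw [show (w ∘ e) = fun m : ℕ => (1:ℝ)/(2*m+1)^3 from hcomp]
      exact odd_cube_summable.hasSum
    rw [hHS.tsum_eq]
    exact odd_cube_sum_le
  obtain ⟨hwsum, hwle⟩ := hwfacts
  -- summability of |c|
  have hcabs_sum : Summable (fun k => |c k|) :=
    Summable.of_nonneg_of_le (fun k => abs_nonneg _) hcb (hwsum.mul_left B)
  set C : ℝ := ∑' k, |c k| with hCdef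
  have hC0 : 0 ≤ C := tsum_nonneg (fun k => abs_nonneg _)
  have hCle : C ≤ B * (923/864) := by
    calc C ≤ ∑' k, B * w k := Summable.tsum_le_tsum hcb hcabs_sum (hwsum.mul_left B)
      _ = B * ∑' k, w k := tsum_mul_left
      _ ≤ B * (923/864) := mul_le_mul_of_nonneg_left hwle hB.le
  -- representation of U₁ as a series
  have hsin_le : ∀ (k : ℕ+) (x : ℝ), |s k x| ≤ 1 := fun k x => Real.abs_sin_le_one _
  have hrep : ∀ x : ℝ, U₁ x = ∑' k, c k * s k x := by
    intro x
    rw [hU₁ x]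
    have hKx : ∀ ξ : ℝ, K x ξ * P₁ ξ
        = ∑' k, (A k * s k x) * (Real.exp (-(lam k * ξ)) * P₁ ξ) := by
      intro ξ
      rw [hK x ξ, ← tsum_mul_right]
      congr 1
      funext k
      have hexp : -ν * (Real.pi * (k:ℝ) / h) ^ 2 * ξ = -(lam k * ξ) := by
        rw [hlamdef]; ring
      rw [hexp]
      ring
    simp only [hKx]
    have hmeas : ∀ k : ℕ+, AEStronglyMeasurable
        (fun ξ => (A k * s k x) * (Real.exp (-(lam k * ξ)) * P₁ ξ))
        (volume.restrict (Set.Ioi (0:ℝ))) := by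
      intro k
      exact (measurable_const.mul ((Real.continuous_exp.comp
        (continuous_const.mul continuous_id).neg).measurable.mul
        hP₁meas)).aestronglyMeasurable
    have hr_le : ∀ k : ℕ+, ∫ ξ in Set.Ioi (0:ℝ),
        ‖(A k * s k x) * (Real.exp (-(lam k * ξ)) * P₁ ξ)‖ ≤ B * (1/(k:ℝ)^3) := by
      intro k
      have hk := hkpos k
      have hint1 : IntegrableOn
          (fun ξ => Real.exp (-(lam k * ξ)) * |P₁ ξ|) (Set.Ioi (0:ℝ)) := by
        have := (hintEP k).abs
        simpa [abs_mul, Real.abs_exp, IntegrableOn] using this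
      have heq : ∀ ξ : ℝ, ‖(A k * s k x) * (Real.exp (-(lam k * ξ)) * P₁ ξ)‖
          = |A k * s k x| * (Real.exp (-(lam k * ξ)) * |P₁ ξ|) := by
        intro ξ
        rw [Real.norm_eq_abs, abs_mul]
        congr 1
        rw [abs_mul, Real.abs_exp]
      simp only [heq]
      rw [integral_const_mul]
      calc |A k * s k x| * ∫ ξ in Set.Ioi (0:ℝ), Real.exp (-(lam k * ξ)) * |P₁ ξ|
          ≤ (4 / (Pi₁ * (k:ℝ) * Real.pi)) * (pbar / lam k) := by
            refine mul_le_mul ?_ (hIabs k) ?_ (by positivity)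
            · rw [abs_mul]
              calc |A k| * |s k x| ≤ |A k| * 1 :=
                  mul_le_mul_of_nonneg_left (hsin_le k x) (abs_nonneg _)
                _ = |A k| := mul_one _
                _ ≤ 4 / (Pi₁ * (k:ℝ) * Real.pi) := hAabs k
            · exact integral_nonneg fun ξ => by positivity
        _ = B * (1/(k:ℝ)^3) := by
            rw [hlamval k, hBdef]
            field_simp
    have hsummable_bound : Summable (fun k : ℕ+ => B * (1/(k:ℝ)^3)) := by
      have h3 : Summable (fun n : ℕ => (1:ℝ)/(n:ℝ)^3) :=
        (Real.summable_one_div_nat_pow (p := 3)).mpr (by norm_num)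
      have := h3.comp_injective PNat.coe_injective
      exact Summable.mul_left B this
    have hfin : ∑' k : ℕ+, ∫⁻ ξ in Set.Ioi (0:ℝ),
        ‖(A k * s k x) * (Real.exp (-(lam k * ξ)) * P₁ ξ)‖₊ ≠ ⊤ := by
      have hint2 : ∀ k : ℕ+, IntegrableOn
          (fun ξ => (A k * s k x) * (Real.exp (-(lam k * ξ)) * P₁ ξ)) (Set.Ioi (0:ℝ)) :=
        fun k => (hintEP k).const_mul _
      have heq2 : ∀ k : ℕ+, ∫⁻ ξ in Set.Ioi (0:ℝ),
          ‖(A k * s k x) * (Real.exp (-(lam k * ξ)) * P₁ ξ)‖₊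
          = ENNReal.ofReal (∫ ξ in Set.Ioi (0:ℝ),
            ‖(A k * s k x) * (Real.exp (-(lam k * ξ)) * P₁ ξ)‖) :=
        fun k => (ofReal_integral_norm_eq_lintegral_enorm (hint2 k)).symm
      simp only [heq2]
      have hle2 : ∀ k : ℕ+, ENNReal.ofReal (∫ ξ in Set.Ioi (0:ℝ),
          ‖(A k * s k x) * (Real.exp (-(lam k * ξ)) * P₁ ξ)‖)
          ≤ ENNReal.ofReal (B * (1/(k:ℝ)^3)) :=
        fun k => ENNReal.ofReal_le_ofReal (hr_le k)
      refine ne_top_of_le_ne_top ?_ (ENNReal.tsum_le_tsum hle2)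
      rw [← ENNReal.ofReal_tsum_of_nonneg (fun k => by positivity) hsummable_bound]
      exact ENNReal.ofReal_ne_top
    rw [integral_tsum hmeas hfin]
    refine tsum_congr fun k => ?_
    rw [integral_const_mul]
    rw [hcdef]
    dsimp only
    ring
  -- continuity of U₁
  have hscont : ∀ k : ℕ+, Continuous (fun x => s k x) := by
    intro k
    rw [hsdef]
    dsimp only
    exact Real.continuous_sin.comp ((continuous_const.mul continuous_id).div_const h)
  have hUcont : Continuous U₁ := by
    have hU' : U₁ = fun x => ∑' k, c k * s k x := funext hrep
    rw [hU']
    refine continuous_tsum (fun k => continuous_const.mul (hscont k)) hcabs_sum ?_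
    intro k x
    rw [Real.norm_eq_abs, abs_mul]
    calc |c k| * |s k x| ≤ |c k| * 1 :=
        mul_le_mul_of_nonneg_left (hsin_le k x) (abs_nonneg _)
      _ = |c k| := mul_one _
  -- pointwise bound
  have hpt : ∀ x : ℝ, (U₁ x)^2 ≤ C * ∑' k, |c k| * (s k x)^2 := by
    intro x
    have hsabs : Summable (fun k => ‖c k * s k x‖) := by
      refine Summable.of_nonneg_of_le (fun k => norm_nonneg _) (fun k => ?_) hcabs_sum
      rw [Real.norm_eq_abs, abs_mul]
      calc |c k| * |s k x| ≤ |c k| * 1 :=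
          mul_le_mul_of_nonneg_left (hsin_le k x) (abs_nonneg _)
        _ = |c k| := mul_one _
    have habs : |U₁ x| ≤ ∑' k, |c k| * |s k x| := by
      rw [hrep x]
      have := norm_tsum_le_tsum_norm hsabs
      rw [Real.norm_eq_abs] at this
      refine this.trans_eq ?_
      refine tsum_congr fun k => ?_
      rw [Real.norm_eq_abs, abs_mul]
    have hA2 : (U₁ x)^2 ≤ (∑' k, |c k| * |s k x|)^2 := by
      rw [← sq_abs (U₁ x)]
      exact pow_le_pow_left₀ (abs_nonneg _) habs 2
    refine hA2.trans ?_
    exact tsum_amgm (fun k => abs_nonneg (c k)) (fun k => hsin_le k x) hcabs_sum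
  -- integral bound
  have hGcont : Continuous (fun x => ∑' k, |c k| * (s k x)^2) := by
    refine continuous_tsum (fun k => continuous_const.mul ((hscont k).pow 2)) hcabs_sum ?_
    intro k x
    rw [Real.norm_eq_abs, abs_of_nonneg (by positivity : (0:ℝ) ≤ |c k| * (s k x)^2)]
    have hsq1 : (s k x)^2 ≤ 1 := by
      rw [← one_pow 2]
      exact sq_le_sq' (by linarith [(abs_le.mp (hsin_le k x)).1]) (abs_le.mp (hsin_le k x)).2
    calc |c k| * (s k x)^2 ≤ |c k| * 1 := mul_le_mul_of_nonneg_left hsq1 (abs_nonneg _)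
      _ = |c k| := mul_one _
  have hint : ∫ x in (0:ℝ)..h, (U₁ x)^2 ≤ C * C * (h/2) := by
    have h1 : ∫ x in (0:ℝ)..h, (U₁ x)^2
        ≤ ∫ x in (0:ℝ)..h, C * ∑' k, |c k| * (s k x)^2 := by
      refine intervalIntegral.integral_mono_on hh.le
        ((hUcont.pow 2).intervalIntegrable _ _)
        ((continuous_const.mul hGcont).intervalIntegrable _ _)
        (fun x _ => hpt x)
    refine h1.trans ?_
    rw [intervalIntegral.integral_const_mul]
    have h3 : ∫ x in (0:ℝ)..h, ∑' k, |c k| * (s k x)^2 = C * (h/2) := by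
      rw [intervalIntegral.integral_of_le hh.le]
      have hmeas2 : ∀ k : ℕ+, AEStronglyMeasurable
          (fun x => |c k| * (s k x)^2) (volume.restrict (Set.Ioc (0:ℝ) h)) :=
        fun k => (continuous_const.mul ((hscont k).pow 2)).aestronglyMeasurable
      have hfin2 : ∑' k : ℕ+, ∫⁻ x in Set.Ioc (0:ℝ) h, ‖|c k| * (s k x)^2‖₊ ≠ ⊤ := by
        have hle3 : ∀ k : ℕ+, ∫⁻ x in Set.Ioc (0:ℝ) h, ‖|c k| * (s k x)^2‖₊
            ≤ ENNReal.ofReal (|c k| * h) := by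
          intro k
          have hptw : ∀ x : ℝ, (‖|c k| * (s k x)^2‖₊ : ENNReal) ≤ ENNReal.ofReal (|c k|) := by
            intro x
            rw [← enorm_eq_nnnorm, ← ofReal_norm_eq_enorm]
            refine ENNReal.ofReal_le_ofReal ?_
            rw [Real.norm_eq_abs, abs_of_nonneg (by positivity : (0:ℝ) ≤ |c k| * (s k x)^2)]
            have hsq1 : (s k x)^2 ≤ 1 := by
              rw [← one_pow 2]
              exact sq_le_sq' (by linarith [(abs_le.mp (hsin_le k x)).1])
                (abs_le.mp (hsin_le k x)).2
            calc |c k| * (s k x)^2 ≤ |c k| * 1 := mul_le_mul_of_nonneg_left hsq1 (abs_nonneg _)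
              _ = |c k| := mul_one _
          calc ∫⁻ x in Set.Ioc (0:ℝ) h, ‖|c k| * (s k x)^2‖₊
              ≤ ∫⁻ _ in Set.Ioc (0:ℝ) h, ENNReal.ofReal (|c k|) :=
                lintegral_mono fun x => hptw x
            _ = ENNReal.ofReal (|c k|) * volume (Set.Ioc (0:ℝ) h) :=
                setLIntegral_const _ _
            _ = ENNReal.ofReal (|c k| * h) := by
                rw [Real.volume_Ioc, sub_zero, ENNReal.ofReal_mul (abs_nonneg _)]
        refine ne_top_of_le_ne_top ?_ (ENNReal.tsum_le_tsum hle3)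
        rw [← ENNReal.ofReal_tsum_of_nonneg
          (fun k => mul_nonneg (abs_nonneg _) hh.le) (hcabs_sum.mul_right h)]
        exact ENNReal.ofReal_ne_top
      rw [integral_tsum hmeas2 hfin2]
      have hval : ∀ k : ℕ+, ∫ x in Set.Ioc (0:ℝ) h, |c k| * (s k x)^2 = |c k| * (h/2) := by
        intro k
        rw [← intervalIntegral.integral_of_le hh.le,
          intervalIntegral.integral_const_mul]
        congr 1
        exact sin_sq_integral h hh k
      rw [tsum_congr hval, tsum_mul_right]
    rw [h3]
    ring_nf
    exact le_refl _
  -- final computation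
  have hN0 : (0:ℝ) ≤ h/2 := by linarith
  have hsqrtN : Real.sqrt (∫ x in (0:ℝ)..h, (U₁ x)^2) ≤ C * Real.sqrt (h/2) := by
    have h4 : C * C * (h/2) = (C * Real.sqrt (h/2))^2 := by
      rw [mul_pow, Real.sq_sqrt hN0]
      ring
    calc Real.sqrt (∫ x in (0:ℝ)..h, (U₁ x)^2)
        ≤ Real.sqrt (C * C * (h/2)) := Real.sqrt_le_sqrt hint
      _ = C * Real.sqrt (h/2) := by
          rw [h4, Real.sqrt_sq (by positivity)]
  have hs2 : (1.414:ℝ) ≤ Real.sqrt 2 := by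
    rw [show (2:ℝ) = ((2:ℝ)) from rfl]
    rw [Real.le_sqrt (by norm_num) (by norm_num)]
    norm_num
  have hs2pos : (0:ℝ) < Real.sqrt 2 := by positivity
  have hπ6 : (3.141592:ℝ) ≤ Real.pi := Real.pi_gt_d6.le
  have hkey : (923:ℝ)/216 ≤ Real.pi * Real.sqrt 2 := by nlinarith
  calc Real.sqrt h * Real.sqrt (∫ x in (0:ℝ)..h, (U₁ x) ^ 2) / ν
      ≤ Real.sqrt h * (C * Real.sqrt (h/2)) / ν := by
        gcongr
    _ = C * (h / Real.sqrt 2) / ν := by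
        rw [Real.sqrt_div hh.le 2]
        rw [show Real.sqrt h * (C * (Real.sqrt h / Real.sqrt 2))
          = C * (Real.sqrt h * Real.sqrt h / Real.sqrt 2) by ring]
        rw [Real.mul_self_sqrt hh.le]
    _ ≤ (B * (923/864)) * (h / Real.sqrt 2) / ν := by
        gcongr
    _ ≤ pbar * h ^ 3 / (Pi₁ * ν ^ 2 * Real.pi ^ 2) := by
        rw [hBdef]
        rw [div_le_div_iff₀ (by positivity) (by positivity)]
        have hexpand : 4 * pbar * h ^ 2 / (Pi₁ * ν * Real.pi ^ 3) * (923 / 864)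
            * (h / Real.sqrt 2) * (Pi₁ * ν ^ 2 * Real.pi ^ 2)
            = (923/216) * (pbar * h^3 * ν) / (Real.pi * Real.sqrt 2) := by
          field_simp
          ring
        rw [hexpand]
        rw [div_le_iff₀ (by positivity)]
        have hq : (0:ℝ) ≤ pbar * h^3 * ν := by positivity
        nlinarith [mul_le_mul_of_nonneg_left hkey hq]
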